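/- Let A = (a_{ij}) be a 2×2 real matrix with det A > 0 and tr A < 0, let d > 0, and set D = diag(1, d) and B(λ) = D⁻¹(λI − A) for λ ∈ ℝ. Assume a₂₂ + d·a₁₁ > 2√(d · det A), and let λ_c > 0 be the bifurcation value at which the discriminant Δ(λ) := (tr B(λ))² − 4 det B(λ) first vanishes, so that Δ(λ) > 0 for 0 ≤ λ < λ_c and Δ(λ_c) = 0. Define β₋(λ) = (tr B(λ) − √Δ(λ))/2 and β₊(λ) = (tr B(λ) + √Δ(λ))/2 for λ ∈ [0, λ_c). Then β₋ is strictly increasing and β₊ is strictly decreasing on [0, λ_c): for all 0 ≤ λ < μ < λ_c, β₋(λ) < β₋(μ) and β₊(λ) > β₊(μ). -/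

import Mathlib

set_option maxHeartbeats 1000000

/-- `B(λ) = D⁻¹ (λ I − A)` with `D = diag (1, d)`. -/
noncomputable def Bmat (A : Matrix (Fin 2) (Fin 2) ℝ) (d lam : ℝ) :
    Matrix (Fin 2) (Fin 2) ℝ :=
  (Matrix.diagonal ![1, d])⁻¹ * (lam • (1 : Matrix (Fin 2) (Fin 2) ℝ) - A)

/-- The discriminant `Δ(λ) = (tr B(λ))² − 4 det B(λ)`. -/
noncomputable def discB (A : Matrix (Fin 2) (Fin 2) ℝ) (d lam : ℝ) : ℝ :=
  (Bmat A d lam).trace ^ 2 - 4 * (Bmat A d lam).det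

/-- The smaller eigenvalue `β₋(λ) = (tr B(λ) − √Δ(λ))/2`. -/
noncomputable def betaMinus (A : Matrix (Fin 2) (Fin 2) ℝ) (d lam : ℝ) : ℝ :=
  ((Bmat A d lam).trace - Real.sqrt (discB A d lam)) / 2

/-- The larger eigenvalue `β₊(λ) = (tr B(λ) + √Δ(λ))/2`. -/
noncomputable def betaPlus (A : Matrix (Fin 2) (Fin 2) ℝ) (d lam : ℝ) : ℝ :=
  ((Bmat A d lam).trace + Real.sqrt (discB A d lam)) / 2

lemma diagInv (d : ℝ) (hd : d ≠ 0) :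
    (Matrix.diagonal ![(1:ℝ), d])⁻¹ = Matrix.diagonal ![1, d⁻¹] := by
  apply Matrix.inv_eq_right_inv
  rw [Matrix.diagonal_mul_diagonal]
  have h : (fun i => ![(1:ℝ), d] i * ![1, d⁻¹] i) = fun _ => (1:ℝ) := by
    funext i
    fin_cases i <;> simp [hd]
  rw [h, Matrix.diagonal_one]

lemma traceB_eq (A : Matrix (Fin 2) (Fin 2) ℝ) (d lam : ℝ) (hd : d ≠ 0) :
    (Bmat A d lam).trace = (lam - A 0 0) + (lam - A 1 1) / d := by
  rw [Bmat, diagInv d hd, Matrix.trace_fin_two]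
  simp [Matrix.diagonal_mul, Matrix.sub_apply, Matrix.smul_apply, Matrix.one_apply]
  ring

lemma detB_eq (A : Matrix (Fin 2) (Fin 2) ℝ) (d lam : ℝ) (hd : d ≠ 0) :
    (Bmat A d lam).det
      = (lam^2 - lam * (A 0 0 + A 1 1) + (A 0 0 * A 1 1 - A 0 1 * A 1 0)) / d := by
  rw [Bmat, Matrix.det_mul, diagInv d hd, Matrix.det_diagonal]
  rw [Matrix.det_fin_two]
  simp [Fin.prod_univ_two, Matrix.sub_apply, Matrix.smul_apply, Matrix.one_apply]
  field_simp; ring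

lemma discB_eq (A : Matrix (Fin 2) (Fin 2) ℝ) (d lam : ℝ) (hd : d ≠ 0) :
    discB A d lam
      = (((1-d)*lam - (A 1 1 - d * A 0 0))^2 + 4*d*(A 0 1 * A 1 0)) / d^2 := by
  rw [discB, traceB_eq A d lam hd, detB_eq A d lam hd]
  field_simp; ring

lemma sq_lt_of (X Y : ℝ) (hX : 0 ≤ X) (hY : 0 < Y) (h : X^2 < Y^2) : X < Y := by
  nlinarith

lemma core (d lamc lam mu h P Sl Sm : ℝ)
    (hd : 0 < d) (hg2 : 0 < (1-d)^2) (hlamc : 0 < lamc)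
    (hlam : 0 ≤ lam) (hlm : lam < mu) (hmc : mu < lamc)
    (hP : 0 < P) (hh : h^2 < (1+d)^2 * P)
    (huc : ((1-d)*lamc - h)^2 = 4*d*P)
    (hul : 4*d*P < ((1-d)*lam - h)^2)
    (hum : 4*d*P < ((1-d)*mu - h)^2)
    (hSl0 : 0 ≤ Sl) (hSm0 : 0 ≤ Sm)
    (hSl : d^2*Sl^2 = ((1-d)*lam - h)^2 - 4*d*P)
    (hSm : d^2*Sm^2 = ((1-d)*mu - h)^2 - 4*d*P) :
    (mu - lam)*(1+d) < d*(Sl - Sm) ∧ 0 < Sl - Sm := by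
  have hmu : 0 ≤ mu := le_of_lt (lt_of_le_of_lt hlam hlm)
  -- sign lemma
  have hsign : ∀ ν : ℝ, 0 ≤ ν → ν < lamc → 4*d*P < ((1-d)*ν - h)^2 →
      0 < (d-1) * ((1-d)*ν - h) := by
    intro ν h0 h1 h2
    nlinarith [huc, mul_pos hg2 (mul_pos (sub_pos.mpr h1) (sub_pos.mpr h1))]
  -- bound lemma
  have hbound : ∀ ν : ℝ, 0 ≤ ν → ν < lamc → ((1-d)*ν - h)^2 < (1+d)^2 * P := by
    intro ν h0 h1
    have t1 : 0 < lamc*(lamc-ν)*((1+d)^2 * P - h^2) :=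
      mul_pos (mul_pos hlamc (by linarith)) (by linarith)
    have t2 : 0 ≤ lamc*ν*((1+d)^2 * P - ((1-d)*lamc - h)^2) :=
      mul_nonneg (mul_nonneg hlamc.le h0) (by nlinarith [mul_pos hg2 hP])
    have t3 : 0 ≤ ν*(lamc-ν)*((1-d)*lamc)^2 :=
      mul_nonneg (mul_nonneg h0 (by linarith)) (sq_nonneg _)
    have iden : lamc^2 * ((1+d)^2 * P - ((1-d)*ν - h)^2)
        = lamc*(lamc-ν)*((1+d)^2 * P - h^2)
          + lamc*ν*((1+d)^2 * P - ((1-d)*lamc - h)^2)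
          + ν*(lamc-ν)*((1-d)*lamc)^2 := by ring
    nlinarith [mul_pos hlamc hlamc]
  -- pointwise: d(1+d) Sν < (d-1) uν
  have hPL : ∀ ν S : ℝ, 0 ≤ ν → ν < lamc → 0 ≤ S →
      4*d*P < ((1-d)*ν - h)^2 →
      d^2*S^2 = ((1-d)*ν - h)^2 - 4*d*P →
      d*(1+d) * S < (d-1) * ((1-d)*ν - h) := by
    intro ν S h0 h1 hS0 hu hS
    have hK : 0 < (d-1) * ((1-d)*ν - h) := hsign ν h0 h1 hu
    apply sq_lt_of _ _ (by positivity) hK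
    have hb := hbound ν h0 h1
    have hS2 : (1+d)^2*(d^2*S^2) = (1+d)^2*(((1-d)*ν - h)^2 - 4*d*P) := by rw [hS]
    nlinarith [hS2, mul_pos hd (sub_pos.mpr hb)]
  have hPLl := hPL lam Sl hlam (lt_trans hlm hmc) hSl0 hul hSl
  have hPLm := hPL mu Sm hmu hmc hSm0 hum hSm
  have hSpos : ∀ ν S : ℝ, 0 ≤ S → 4*d*P < ((1-d)*ν - h)^2 →
      d^2*S^2 = ((1-d)*ν - h)^2 - 4*d*P → 0 < S := by
    intro ν S hS0 hu hS
    have h1 : 0 < d^2*S^2 := by rw [hS]; linarith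
    have h2 : S ≠ 0 := by intro hz; rw [hz] at h1; simp at h1
    exact lt_of_le_of_ne hS0 (Ne.symm h2)
  have hSlpos : 0 < Sl := hSpos lam Sl hSl0 hul hSl
  have hSmpos : 0 < Sm := hSpos mu Sm hSm0 hum hSm
  have hsum : 0 < d*(Sl + Sm) := by positivity
  have hdiff : d^2*Sl^2 - d^2*Sm^2
      = (mu - lam)*((d-1)*((1-d)*lam - h) + (d-1)*((1-d)*mu - h)) := by
    linear_combination hSl - hSm
  have h9 : ((mu-lam)*(1+d)) * (d*(Sl+Sm)) < (d*(Sl-Sm)) * (d*(Sl+Sm)) := by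
    nlinarith [mul_lt_mul_of_pos_left (show d*(1+d)*Sl + d*(1+d)*Sm <
      (d-1)*((1-d)*lam - h) + (d-1)*((1-d)*mu - h) by linarith)
      (sub_pos.mpr hlm), hdiff]
  have key := lt_of_mul_lt_mul_right h9 hsum.le
  refine ⟨key, ?_⟩
  nlinarith [mul_pos (sub_pos.mpr hlm) (show (0:ℝ) < 1+d by linarith)]

/-- Let `A` be a `2 × 2` real matrix with `det A > 0`, `tr A < 0`, `d > 0`,
and `a₂₂ + d a₁₁ > 2 √(d det A)`. Let `λ_c > 0` be the bifurcation value at which the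
discriminant `Δ(λ) = (tr B(λ))² − 4 det B(λ)` first vanishes, so `Δ(λ) > 0` for
`0 ≤ λ < λ_c` and `Δ(λ_c) = 0`. Then `β₋` is strictly increasing and `β₊` is strictly
decreasing on `[0, λ_c)`. -/
theorem stmt17 (A : Matrix (Fin 2) (Fin 2) ℝ) (hdet : 0 < A.det) (htr : A.trace < 0)
    (d : ℝ) (hd : 0 < d)
    (hcond : 2 * Real.sqrt (d * A.det) < A 1 1 + d * A 0 0)
    (lamc : ℝ) (hlamc : 0 < lamc)
    (hpos : ∀ lam : ℝ, 0 ≤ lam → lam < lamc → 0 < discB A d lam)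
    (hzero : discB A d lamc = 0) :
    ∀ lam mu : ℝ, 0 ≤ lam → lam < mu → mu < lamc →
      betaMinus A d lam < betaMinus A d mu ∧ betaPlus A d mu < betaPlus A d lam := by
  intro lam mu hlam hlm hmc
  have hd0 : d ≠ 0 := ne_of_gt hd
  set a := A 0 0 with ha
  set b := A 0 1 with hb
  set c := A 1 0 with hc
  set e := A 1 1 with he
  have hdet' : 0 < a*e - b*c := by rw [Matrix.det_fin_two] at hdet; exact hdet
  have htr' : a + e < 0 := by rw [Matrix.trace_fin_two] at htr; exact htr
  have hs : 0 < e + d*a := lt_of_le_of_lt (by positivity) hcond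
  have had : 0 < a*(d-1) := by nlinarith [hs, htr']
  have hd1 : d ≠ 1 := by intro h; rw [h] at had; simp at had
  have hq : 0 < e + d^2*a := by nlinarith [mul_pos hd had]
  have htrneg : 0 < -(a+e) := by linarith
  have hae : a*e < 0 := by nlinarith [sq_nonneg (e - d*a), mul_pos htrneg hq, sq_nonneg (1+d)]
  have hP : 0 < -(b*c) := by linarith
  have hg2 : 0 < (1-d)^2 := by
    have h1 : (1:ℝ) - d ≠ 0 := sub_ne_zero.mpr (Ne.symm hd1)
    positivity
  have hh : (e - d*a)^2 < (1+d)^2 * (-(b*c)) := by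
    nlinarith [mul_pos htrneg hq,
      mul_lt_mul_of_pos_left (show -(a*e) < -(b*c) by linarith)
        (show (0:ℝ) < (1+d)^2 by positivity)]
  -- u(λc)² = 4 d P
  have huc : ((1-d)*lamc - (e - d*a))^2 = 4*d*(-(b*c)) := by
    have h2 := hzero
    rw [discB_eq A d lamc hd0] at h2
    have h3 : (((1-d)*lamc - (e - d*a))^2 + 4*d*(b*c)) = 0 := by
      field_simp at h2; linarith [h2]
    linarith
  have hupos : ∀ ν : ℝ, 0 ≤ ν → ν < lamc →
      4*d*(-(b*c)) < ((1-d)*ν - (e - d*a))^2 := by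
    intro ν h0 h1
    have h2 := hpos ν h0 h1
    rw [discB_eq A d ν hd0] at h2
    have h3 : 0 < ((1-d)*ν - (e - d*a))^2 + 4*d*(b*c) := by
      rcases (div_pos_iff).mp h2 with ⟨h4, _⟩ | ⟨_, h5⟩
      · exact h4
      · nlinarith [sq_nonneg d]
    linarith
  -- square-root facts
  have hdisc : ∀ ν : ℝ, 0 ≤ ν → ν < lamc →
      d^2 * (Real.sqrt (discB A d ν))^2
        = ((1-d)*ν - (e - d*a))^2 - 4*d*(-(b*c)) := by
    intro ν h0 h1
    rw [Real.sq_sqrt (hpos ν h0 h1).le, discB_eq A d ν hd0]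
    field_simp
    simp only [ha, hb, hc, he]; ring
  have hcore := core d lamc lam mu (e - d*a) (-(b*c))
    (Real.sqrt (discB A d lam)) (Real.sqrt (discB A d mu))
    hd hg2 hlamc hlam hlm hmc hP hh huc
    (hupos lam hlam (lt_trans hlm hmc)) (hupos mu (le_of_lt (lt_of_le_of_lt hlam hlm)) hmc)
    (Real.sqrt_nonneg _) (Real.sqrt_nonneg _)
    (hdisc lam hlam (lt_trans hlm hmc)) (hdisc mu (le_of_lt (lt_of_le_of_lt hlam hlm)) hmc)
  obtain ⟨key, hSdiff⟩ := hcore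
  rw [betaMinus, betaMinus, betaPlus, betaPlus,
    traceB_eq A d lam hd0, traceB_eq A d mu hd0]
  have hTd : ((mu-a)+(mu-e)/d) - ((lam-a)+(lam-e)/d) = (mu-lam)*(1+d)/d := by
    field_simp; ring
  have hkey' : (mu-lam)*(1+d)/d < Real.sqrt (discB A d lam) - Real.sqrt (discB A d mu) := by
    rw [div_lt_iff₀ hd]
    linarith [key]
  constructor
  · have h1 : 0 < ((mu-a)+(mu-e)/d) - ((lam-a)+(lam-e)/d) := by
      rw [hTd]
      exact div_pos (mul_pos (sub_pos.mpr hlm) (by linarith)) hd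
    linarith
  · linarith
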